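/- Suppose multiplication in F_{16} over F_4 (the degree-2 extension of the field with 4 elements) admits a bilinear multiplication algorithm with r bilinear multiplications. Then multiplication in F_{4^5} over F_4 admits a bilinear multiplication algorithm with 9 + r bilinear multiplications: there exist F_4-linear forms x_i^*, y_i^* on F_{4^5} and elements c_i ∈ F_{4^5}, for 1 ≤ i ≤ 9 + r, such that x·y = Σ_{i=1}^{9+r} x_i^*(x) y_i^*(y) c_i for all x, y ∈ F_{4^5}. In particular, μ_4(5) ≤ 9·μ_4(1) + μ_4(2) = 9 + μ_4(2). -/

import Mathlib

set_option maxHeartbeats 4000000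

/-- `A` (a `K`-algebra) admits a bilinear multiplication algorithm of bilinear
complexity `r`. -/
def HasBilinearMulAlg (K A : Type*) [Field K] [CommRing A] [Algebra K A] (r : ℕ) : Prop :=
  ∃ (xs ys : Fin r → (A →ₗ[K] K)) (c : Fin r → A),
    ∀ a b : A, a * b = ∑ i, (xs i a * ys i b) • c i

/-- The interpolation identity behind the genus-0 Chudnovsky-type construction for
`F_{4^5}/F_4`: evaluation at the four rational points `0, 1, ω, ω+1`, at infinity, and
(via Karatsuba) at the two quadratic places `x²+x+ω`, `x²+x+ω+1`. -/
private lemma key_interpolation {R : Type*} [CommRing R]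
    (W g A0 A1 A2 A3 A4 B0 B1 B2 B3 B4 : R)
    (h2 : (2:R) = 0) (hW : W^2 = W + 1) :
    (A0 + A1*g + A2*g^2 + A3*g^3 + A4*g^4) * (B0 + B1*g + B2*g^2 + B3*g^3 + B4*g^4) =
      (A0) * (B0) * (1 + g + g^3 + g^7) +
      (A4 + A3 + A2 + A1 + A0) * (B4 + B3 + B2 + B1 + B0) * (g + g^4 + g^5 + g^6 + g^7) +
      (A3 + A2 + A0 + W*A4 + W*A2 + W*A1) * (B3 + B2 + B0 + W*B4 + W*B2 + W*B1) * (g + g^2 + g^3 + g^4 + g^5 + g^7 + W*g + W*g^3 + W*g^5 + W*g^6) +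
      (A4 + A3 + A1 + A0 + W*A4 + W*A2 + W*A1) * (B4 + B3 + B1 + B0 + W*B4 + W*B2 + W*B1) * (g^2 + g^4 + g^6 + g^7 + W*g + W*g^3 + W*g^5 + W*g^6) +
      (A4) * (B4) * (g + g^2 + g^4 + g^8) +
      (A4 + A0 + W*A3 + W*A2) * (B4 + B0 + W*B3 + W*B2) * (g + g^7 + W*g + W*g^2 + W*g^4 + W*g^5) +
      (A4 + A3 + A2 + A1 + W*A3) * (B4 + B3 + B2 + B1 + W*B3) * (g + g^4 + W*g^2 + W*g^3 + W*g^5 + W*g^6) +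
      (A3 + A2 + A1 + A0 + W*A2) * (B3 + B2 + B1 + B0 + W*B2) * (g^2 + g^3 + g^4 + g^5 + g^6 + g^7 + W*g^2 + W*g^5) +
      (A4 + A3 + A2 + A0 + W*A3 + W*A2) * (B4 + B3 + B2 + B0 + W*B3 + W*B2) * (g^2 + g^4 + g^5 + g^7 + W*g + W*g^2 + W*g^4 + W*g^5) +
      (A4 + A2 + A1 + W*A3) * (B4 + B2 + B1 + W*B3) * (g + g^2 + g^3 + g^4 + g^5 + g^6 + W*g^2 + W*g^3 + W*g^5 + W*g^6) +
      (A3 + A1 + A0 + W*A2) * (B3 + B1 + B0 + W*B2) * (g^3 + g^4 + g^6 + g^7 + W*g^2 + W*g^5) := by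
  linear_combination ((-5*g*A4*B4 - 4*g*A4*B3 - 7*g*A4*B2 - 5*g*A4*B1 - 2*g*A4*B0 - 4*g*A3*B4 - 7*g*A3*B3 - 7*g*A3*B2 - 2*g*A3*B1 - 2*g*A3*B0 - 7*g*A2*B4 - 7*g*A2*B3 - 10*g*A2*B2 - 5*g*A2*B1 - 4*g*A2*B0 - 5*g*A1*B4 - 2*g*A1*B3 - 5*g*A1*B2 - 5*g*A1*B1 - 2*g*A1*B0 - 2*g*A0*B4 - 2*g*A0*B3 - 4*g*A0*B2 - 2*g*A0*B1 - 2*g^2*A4*B4 - 4*g^2*A4*B3 - 4*g^2*A4*B2 - 2*g^2*A4*B1 - 4*g^2*A3*B4 - 10*g^2*A3*B3 - 9*g^2*A3*B2 - 2*g^2*A3*B1 - 2*g^2*A3*B0 - 4*g^2*A2*B4 - 9*g^2*A2*B3 - 12*g^2*A2*B2 - 4*g^2*A2*B1 - 4*g^2*A2*B0 - 2*g^2*A1*B4 - 2*g^2*A1*B3 - 4*g^2*A1*B2 - 2*g^2*A1*B1 - 2*g^2*A0*B3 - 4*g^2*A0*B2 - 5*g^3*A4*B4 - 4*g^3*A4*B3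 - 5*g^3*A4*B2 - 5*g^3*A4*B1 - 2*g^3*A4*B0 - 4*g^3*A3*B4 - 5*g^3*A3*B3 - 4*g^3*A3*B2 - 4*g^3*A3*B1 - 5*g^3*A2*B4 - 4*g^3*A2*B3 - 7*g^3*A2*B2 - 5*g^3*A2*B1 - 2*g^3*A2*B0 - 5*g^3*A1*B4 - 4*g^3*A1*B3 - 5*g^3*A1*B2 - 5*g^3*A1*B1 - 2*g^3*A1*B0 - 2*g^3*A0*B4 - 2*g^3*A0*B2 - 2*g^3*A0*B1 - 2*g^4*A4*B4 - 2*g^4*A4*B3 - 4*g^4*A4*B2 - 2*g^4*A4*B1 - 2*g^4*A3*B4 - 7*g^4*A3*B3 - 5*g^4*A3*B2 - 2*g^4*A3*B0 - 4*g^4*A2*B4 - 5*g^4*A2*B3 - 9*g^4*A2*B2 - 2*g^4*A2*B1 - 2*g^4*A2*B0 - 2*g^4*A1*B4 - 2*g^4*A1*B2 - 2*g^4*A1*B1 - 2*g^4*A0*B3 - 2*g^4*A0*B2 - 5*g^5*A4*B4 - 6*g^5*A4*B3 - 7*g^5*A4*B2 - 5*g^5*A4*B1 - 2*g^5*A4*B0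 - 6*g^5*A3*B4 - 10*g^5*A3*B3 - 11*g^5*A3*B2 - 4*g^5*A3*B1 - 2*g^5*A3*B0 - 7*g^5*A2*B4 - 11*g^5*A2*B3 - 15*g^5*A2*B2 - 7*g^5*A2*B1 - 6*g^5*A2*B0 - 5*g^5*A1*B4 - 4*g^5*A1*B3 - 7*g^5*A1*B2 - 5*g^5*A1*B1 - 2*g^5*A1*B0 - 2*g^5*A0*B4 - 2*g^5*A0*B3 - 6*g^5*A0*B2 - 2*g^5*A0*B1 - 5*g^6*A4*B4 - 4*g^6*A4*B3 - 5*g^6*A4*B2 - 5*g^6*A4*B1 - 2*g^6*A4*B0 - 4*g^6*A3*B4 - 5*g^6*A3*B3 - 4*g^6*A3*B2 - 4*g^6*A3*B1 - 5*g^6*A2*B4 - 4*g^6*A2*B3 - 7*g^6*A2*B2 - 5*g^6*A2*B1 - 2*g^6*A2*B0 - 5*g^6*A1*B4 - 4*g^6*A1*B3 - 5*g^6*A1*B2 - 5*g^6*A1*B1 - 2*g^6*A1*B0 - 2*g^6*A0*B4 - 2*g^6*A0*B2 - 2*g^6*A0*B1 - 2*g^7*A4*B4 - 2*g^7*A4*B2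 - 2*g^7*A4*B1 - 2*g^7*A3*B3 - 2*g^7*A3*B2 - 2*g^7*A2*B4 - 2*g^7*A2*B3 - 6*g^7*A2*B2 - 2*g^7*A2*B1 - 2*g^7*A1*B4 - 2*g^7*A1*B2 - 2*g^7*A1*B1 - 2*W*g*A4*B4 - 2*W*g*A4*B2 - 2*W*g*A4*B1 - 2*W*g*A3*B3 - 2*W*g*A3*B2 - 2*W*g*A2*B4 - 2*W*g*A2*B3 - 4*W*g*A2*B2 - 2*W*g*A2*B1 - 2*W*g*A1*B4 - 2*W*g*A1*B2 - 2*W*g*A1*B1 - 4*W*g^2*A3*B3 - 2*W*g^2*A3*B2 - 2*W*g^2*A2*B3 - 4*W*g^2*A2*B2 - 2*W*g^3*A4*B4 - 2*W*g^3*A4*B2 - 2*W*g^3*A4*B1 - 2*W*g^3*A3*B3 - 2*W*g^3*A2*B4 - 2*W*g^3*A2*B2 - 2*W*g^3*A2*B1 - 2*W*g^3*A1*B4 - 2*W*g^3*A1*B2 - 2*W*g^3*A1*B1 - 2*W*g^4*A3*B3 - 2*W*g^4*A3*B2 - 2*W*g^4*A2*B3 - 2*W*g^4*A2*B2 - 2*W*g^5*A4*B4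 - 2*W*g^5*A4*B2 - 2*W*g^5*A4*B1 - 4*W*g^5*A3*B3 - 2*W*g^5*A3*B2 - 2*W*g^5*A2*B4 - 2*W*g^5*A2*B3 - 6*W*g^5*A2*B2 - 2*W*g^5*A2*B1 - 2*W*g^5*A1*B4 - 2*W*g^5*A1*B2 - 2*W*g^5*A1*B1 - 2*W*g^6*A4*B4 - 2*W*g^6*A4*B2 - 2*W*g^6*A4*B1 - 2*W*g^6*A3*B3 - 2*W*g^6*A2*B4 - 2*W*g^6*A2*B2 - 2*W*g^6*A2*B1 - 2*W*g^6*A1*B4 - 2*W*g^6*A1*B2 - 2*W*g^6*A1*B1)) * hW + ((-5*g*A4*B4 - 3*g*A4*B3 - 5*g*A4*B2 - 4*g*A4*B1 - 2*g*A4*B0 - 3*g*A3*B4 - 5*g*A3*B3 - 5*g*A3*B2 - 2*g*A3*B1 - 2*g*A3*B0 - 5*g*A2*B4 - 5*g*A2*B3 - 7*g*A2*B2 - 4*g*A2*B1 - 3*g*A2*B0 - 4*g*A1*B4 - 2*g*A1*B3 - 4*g*A1*B2 - 4*g*A1*B1 - g*A1*B0 - 2*g*A0*B4 - 2*g*A0*B3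 - 3*g*A0*B2 - g*A0*B1 - 2*g*A0*B0 - 3*g^2*A4*B4 - 3*g^2*A4*B3 - 3*g^2*A4*B2 - 2*g^2*A4*B1 - g^2*A4*B0 - 3*g^2*A3*B4 - 7*g^2*A3*B3 - 6*g^2*A3*B2 - 2*g^2*A3*B1 - 3*g^2*A3*B0 - 3*g^2*A2*B4 - 6*g^2*A2*B3 - 8*g^2*A2*B2 - 3*g^2*A2*B1 - 3*g^2*A2*B0 - 2*g^2*A1*B4 - 2*g^2*A1*B3 - 3*g^2*A1*B2 - 2*g^2*A1*B1 - g^2*A1*B0 - g^2*A0*B4 - 3*g^2*A0*B3 - 3*g^2*A0*B2 - g^2*A0*B1 - 2*g^2*A0*B0 - 3*g^3*A4*B4 - 2*g^3*A4*B3 - 3*g^3*A4*B2 - 3*g^3*A4*B1 - g^3*A4*B0 - 2*g^3*A3*B4 - 4*g^3*A3*B3 - 3*g^3*A3*B2 - 3*g^3*A3*B1 - g^3*A3*B0 - 3*g^3*A2*B4 - 3*g^3*A2*B3 - 5*g^3*A2*B2 - 3*g^3*A2*B1 - 2*g^3*A2*B0 - 3*g^3*A1*B4 - 3*g^3*A1*B3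 - 3*g^3*A1*B2 - 4*g^3*A1*B1 - 2*g^3*A1*B0 - g^3*A0*B4 - g^3*A0*B3 - 2*g^3*A0*B2 - 2*g^3*A0*B1 - 2*g^3*A0*B0 - 4*g^4*A4*B4 - 3*g^4*A4*B3 - 4*g^4*A4*B2 - 3*g^4*A4*B1 - g^4*A4*B0 - 3*g^4*A3*B4 - 7*g^4*A3*B3 - 5*g^4*A3*B2 - 2*g^4*A3*B1 - 4*g^4*A3*B0 - 4*g^4*A2*B4 - 5*g^4*A2*B3 - 7*g^4*A2*B2 - 3*g^4*A2*B1 - 3*g^4*A2*B0 - 3*g^4*A1*B4 - 2*g^4*A1*B3 - 3*g^4*A1*B2 - 4*g^4*A1*B1 - 2*g^4*A1*B0 - g^4*A0*B4 - 4*g^4*A0*B3 - 3*g^4*A0*B2 - 2*g^4*A0*B1 - 3*g^4*A0*B0 - 4*g^5*A4*B4 - 4*g^5*A4*B3 - 5*g^5*A4*B2 - 3*g^5*A4*B1 - 2*g^5*A4*B0 - 4*g^5*A3*B4 - 7*g^5*A3*B3 - 7*g^5*A3*B2 - 3*g^5*A3*B1 - 3*g^5*A3*B0 - 5*g^5*A2*B4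 - 7*g^5*A2*B3 - 10*g^5*A2*B2 - 5*g^5*A2*B1 - 5*g^5*A2*B0 - 3*g^5*A1*B4 - 3*g^5*A1*B3 - 5*g^5*A1*B2 - 4*g^5*A1*B1 - 2*g^5*A1*B0 - 2*g^5*A0*B4 - 3*g^5*A0*B3 - 5*g^5*A0*B2 - 2*g^5*A0*B1 - 2*g^5*A0*B0 - 4*g^6*A4*B4 - 3*g^6*A4*B3 - 3*g^6*A4*B2 - 4*g^6*A4*B1 - 2*g^6*A4*B0 - 3*g^6*A3*B4 - 4*g^6*A3*B3 - 3*g^6*A3*B2 - 4*g^6*A3*B1 - 2*g^6*A3*B0 - 3*g^6*A2*B4 - 3*g^6*A2*B3 - 5*g^6*A2*B2 - 4*g^6*A2*B1 - 2*g^6*A2*B0 - 4*g^6*A1*B4 - 4*g^6*A1*B3 - 4*g^6*A1*B2 - 5*g^6*A1*B1 - 3*g^6*A1*B0 - 2*g^6*A0*B4 - 2*g^6*A0*B3 - 2*g^6*A0*B2 - 3*g^6*A0*B1 - 2*g^6*A0*B0 - 3*g^7*A4*B4 - g^7*A4*B3 - 2*g^7*A4*B2 - 2*g^7*A4*B1 -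 2*g^7*A4*B0 - g^7*A3*B4 - 4*g^7*A3*B3 - 3*g^7*A3*B2 - 2*g^7*A3*B1 - 3*g^7*A3*B0 - 2*g^7*A2*B4 - 3*g^7*A2*B3 - 5*g^7*A2*B2 - 2*g^7*A2*B1 - 2*g^7*A2*B0 - 2*g^7*A1*B4 - 2*g^7*A1*B3 - 2*g^7*A1*B2 - 3*g^7*A1*B1 - 2*g^7*A1*B0 - 2*g^7*A0*B4 - 3*g^7*A0*B3 - 2*g^7*A0*B2 - 2*g^7*A0*B1 - 4*g^7*A0*B0 - 5*W*g*A4*B4 - 5*W*g*A4*B3 - 6*W*g*A4*B2 - 4*W*g*A4*B1 - 3*W*g*A4*B0 - 5*W*g*A3*B4 - 7*W*g*A3*B3 - 7*W*g*A3*B2 - 3*W*g*A3*B1 - 3*W*g*A3*B0 - 6*W*g*A2*B4 - 7*W*g*A2*B3 - 9*W*g*A2*B2 - 4*W*g*A2*B1 - 4*W*g*A2*B0 - 4*W*g*A1*B4 - 3*W*g*A1*B3 - 4*W*g*A1*B2 - 4*W*g*A1*B1 - 2*W*g*A1*B0 - 3*W*g*A0*B4 - 3*W*g*A0*B3 - 4*W*g*A0*B2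 - 2*W*g*A0*B1 - 2*W*g*A0*B0 - 4*W*g^2*A4*B4 - 5*W*g^2*A4*B3 - 5*W*g^2*A4*B2 - 3*W*g^2*A4*B1 - 2*W*g^2*A4*B0 - 5*W*g^2*A3*B4 - 10*W*g^2*A3*B3 - 10*W*g^2*A3*B2 - 4*W*g^2*A3*B1 - 3*W*g^2*A3*B0 - 5*W*g^2*A2*B4 - 10*W*g^2*A2*B3 - 13*W*g^2*A2*B2 - 5*W*g^2*A2*B1 - 5*W*g^2*A2*B0 - 3*W*g^2*A1*B4 - 4*W*g^2*A1*B3 - 5*W*g^2*A1*B2 - 4*W*g^2*A1*B1 - 2*W*g^2*A1*B0 - 2*W*g^2*A0*B4 - 3*W*g^2*A0*B3 - 5*W*g^2*A0*B2 - 2*W*g^2*A0*B1 - 2*W*g^2*A0*B0 - 5*W*g^3*A4*B4 - 4*W*g^3*A4*B3 - 5*W*g^3*A4*B2 - 5*W*g^3*A4*B1 - 2*W*g^3*A4*B0 - 4*W*g^3*A3*B4 - 5*W*g^3*A3*B3 - 5*W*g^3*A3*B2 - 4*W*g^3*A3*B1 - W*g^3*A3*B0 - 5*W*g^3*A2*B4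 - 5*W*g^3*A2*B3 - 8*W*g^3*A2*B2 - 6*W*g^3*A2*B1 - 3*W*g^3*A2*B0 - 5*W*g^3*A1*B4 - 4*W*g^3*A1*B3 - 6*W*g^3*A1*B2 - 5*W*g^3*A1*B1 - 2*W*g^3*A1*B0 - 2*W*g^3*A0*B4 - W*g^3*A0*B3 - 3*W*g^3*A0*B2 - 2*W*g^3*A0*B1 - W*g^3*A0*B0 - 3*W*g^4*A4*B4 - 4*W*g^4*A4*B3 - 4*W*g^4*A4*B2 - 2*W*g^4*A4*B1 - 2*W*g^4*A4*B0 - 4*W*g^4*A3*B4 - 7*W*g^4*A3*B3 - 8*W*g^4*A3*B2 - 2*W*g^4*A3*B1 - 2*W*g^4*A3*B0 - 4*W*g^4*A2*B4 - 8*W*g^4*A2*B3 - 9*W*g^4*A2*B2 - 3*W*g^4*A2*B1 - 4*W*g^4*A2*B0 - 2*W*g^4*A1*B4 - 2*W*g^4*A1*B3 - 3*W*g^4*A1*B2 - 2*W*g^4*A1*B1 - W*g^4*A1*B0 - 2*W*g^4*A0*B4 - 2*W*g^4*A0*B3 - 4*W*g^4*A0*B2 - W*g^4*A0*B1 - W*g^4*A0*B0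 - 6*W*g^5*A4*B4 - 6*W*g^5*A4*B3 - 7*W*g^5*A4*B2 - 5*W*g^5*A4*B1 - 3*W*g^5*A4*B0 - 6*W*g^5*A3*B4 - 11*W*g^5*A3*B3 - 11*W*g^5*A3*B2 - 5*W*g^5*A3*B1 - 4*W*g^5*A3*B0 - 7*W*g^5*A2*B4 - 11*W*g^5*A2*B3 - 16*W*g^5*A2*B2 - 7*W*g^5*A2*B1 - 6*W*g^5*A2*B0 - 5*W*g^5*A1*B4 - 5*W*g^5*A1*B3 - 7*W*g^5*A1*B2 - 6*W*g^5*A1*B1 - 3*W*g^5*A1*B0 - 3*W*g^5*A0*B4 - 4*W*g^5*A0*B3 - 6*W*g^5*A0*B2 - 3*W*g^5*A0*B1 - 3*W*g^5*A0*B0 - 6*W*g^6*A4*B4 - 4*W*g^6*A4*B3 - 5*W*g^6*A4*B2 - 6*W*g^6*A4*B1 - 2*W*g^6*A4*B0 - 4*W*g^6*A3*B4 - 5*W*g^6*A3*B3 - 5*W*g^6*A3*B2 - 4*W*g^6*A3*B1 - W*g^6*A3*B0 - 5*W*g^6*A2*B4 - 5*W*g^6*A2*B3 - 7*W*g^6*A2*B2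 - 6*W*g^6*A2*B1 - 3*W*g^6*A2*B0 - 6*W*g^6*A1*B4 - 4*W*g^6*A1*B3 - 6*W*g^6*A1*B2 - 6*W*g^6*A1*B1 - 2*W*g^6*A1*B0 - 2*W*g^6*A0*B4 - W*g^6*A0*B3 - 3*W*g^6*A0*B2 - 2*W*g^6*A0*B1 - W*g^6*A0*B0 - 2*W*g^7*A4*B4 - 2*W*g^7*A4*B3 - 3*W*g^7*A4*B2 - 2*W*g^7*A4*B1 - W*g^7*A4*B0 - 2*W*g^7*A3*B4 - 2*W*g^7*A3*B3 - 4*W*g^7*A3*B2 - W*g^7*A3*B1 - W*g^7*A3*B0 - 3*W*g^7*A2*B4 - 4*W*g^7*A2*B3 - 6*W*g^7*A2*B2 - 3*W*g^7*A2*B1 - 3*W*g^7*A2*B0 - 2*W*g^7*A1*B4 - W*g^7*A1*B3 - 3*W*g^7*A1*B2 - 2*W*g^7*A1*B1 - W*g^7*A1*B0 - W*g^7*A0*B4 - W*g^7*A0*B3 - 3*W*g^7*A0*B2 - W*g^7*A0*B1)) * h2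

/-- A bilinear multiplication algorithm can be padded with useless products. -/
private lemma HasBilinearMulAlg.pad {K A : Type*} [Field K] [CommRing A] [Algebra K A]
    {n : ℕ} (k : ℕ) (h : HasBilinearMulAlg K A n) : HasBilinearMulAlg K A (n + k) := by
  obtain ⟨xs, ys, c, h⟩ := h
  refine ⟨Fin.append xs 0, Fin.append ys 0, Fin.append c 0, fun a b => ?_⟩
  rw [h a b, Fin.sum_univ_add]
  simp [Fin.append_left, Fin.append_right]

/-- The bilinear complexity of an algebra is at least its dimension. -/
private lemma HasBilinearMulAlg.finrank_le {K A : Type*} [Field K] [CommRing A] [Algebra K A]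
    {n : ℕ} (h : HasBilinearMulAlg K A n) : Module.finrank K A ≤ n := by
  obtain ⟨xs, ys, c, h⟩ := h
  have hspan : Submodule.span K (Set.range c) = ⊤ := by
    rw [Submodule.eq_top_iff']
    intro a
    have ha := h a 1
    rw [mul_one] at ha
    rw [ha]
    exact Submodule.sum_mem _ fun i _ =>
      Submodule.smul_mem _ _ (Submodule.subset_span ⟨i, rfl⟩)
  simpa using finrank_le_of_span_eq_top hspan

theorem bilinear_mul_F4_5
    (K : Type*) [Field K] [Fintype K] (hK : Fintype.card K = 4)
    (M : Type*) [Field M] [Algebra K M] (hM : Module.finrank K M = 2)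
    (L : Type*) [Field L] [Algebra K L] (hL : Module.finrank K L = 5)
    (r : ℕ) (hr : HasBilinearMulAlg K M r) :
    HasBilinearMulAlg K L (9 + r) := by
  classical
  -- `K` has characteristic 2
  have h2 : (2:K) = 0 := by
    have h4 : ((Fintype.card K : ℕ) : K) = 0 := FiniteField.cast_card_eq_zero K
    rw [hK] at h4
    have h22 : (2:K) * 2 = 0 := by norm_num at h4 ⊢; linear_combination h4
    exact mul_self_eq_zero.mp h22
  -- `K` contains a root `ω` of `x² + x + 1`
  obtain ⟨ω, hω0, hω1⟩ : ∃ x : K, x ≠ 0 ∧ x ≠ 1 := by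
    by_contra hc
    push_neg at hc
    have hsub : (Finset.univ : Finset K) ⊆ {0, 1} := by
      intro x _
      rcases eq_or_ne x 0 with h | h
      · simp [h]
      · simp [hc x h]
    have hle := Finset.card_le_card hsub
    rw [Finset.card_univ, hK] at hle
    have hc2 : ({0, 1} : Finset K).card ≤ 2 :=
      (Finset.card_insert_le _ _).trans (by simp)
    omega
  have hωq : ω^2 = ω + 1 := by
    have hp := FiniteField.pow_card ω
    rw [hK] at hp
    have hfac : ω * (ω - 1) * (ω^2 + ω + 1) = 0 := by linear_combination hp
    rcases mul_eq_zero.mp hfac with h | h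
    · rcases mul_eq_zero.mp h with h | h
      · exact absurd h hω0
      · exact absurd (sub_eq_zero.mp h) hω1
    · linear_combination h - (ω+1) * h2
  -- a power basis of `L` over `K`
  have hfd : FiniteDimensional K L := FiniteDimensional.of_finrank_pos (by rw [hL]; norm_num)
  obtain ⟨γ, hγ⟩ := Field.exists_primitive_element_of_finite_bot K L
  have hint : IsIntegral K γ := IsIntegral.of_finite K γ
  let pb : PowerBasis K L := (IntermediateField.adjoin.powerBasis hint).map
    ((IntermediateField.equivOfEq hγ).trans IntermediateField.topEquiv)
  have hdim : pb.dim = 5 := by rw [← PowerBasis.finrank pb, hL]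
  let β : Module.Basis (Fin 5) K L := pb.basis.reindex (finCongr hdim)
  have hβ : ∀ i : Fin 5, β i = pb.gen ^ (i : ℕ) := by
    intro i
    simp [β, Module.Basis.reindex_apply, PowerBasis.coe_basis]
  have hβ0 : β 0 = 1 := by simpa using hβ 0
  have hβ1 : β 1 = pb.gen := by simpa using hβ 1
  have hβ2 : β 2 = pb.gen^2 := by simpa using hβ 2
  have hβ3 : β 3 = pb.gen^3 := by simpa using hβ 3
  have hβ4 : β 4 = pb.gen^4 := by simpa using hβ 4
  have H2 : (2:L) = 0 := by
    rw [← map_ofNat (algebraMap K L) 2, h2, map_zero]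
  have HW : (algebraMap K L ω)^2 = algebraMap K L ω + 1 := by
    have h := congrArg (algebraMap K L) hωq
    simpa using h
  -- the explicit 11-multiplication algorithm for `L`
  have h11 : HasBilinearMulAlg K L 11 := by
    refine ⟨![β.coord 0,
      β.coord 0 + β.coord 1 + β.coord 2 + β.coord 3 + β.coord 4,
      β.coord 0 + ω • β.coord 1 + (ω+1) • β.coord 2 + β.coord 3 + ω • β.coord 4,
      β.coord 0 + (ω+1) • β.coord 1 + ω • β.coord 2 + β.coord 3 + (ω+1) • β.coord 4,
      β.coord 4,
      β.coord 0 + ω • β.coord 2 + ω • β.coord 3 + β.coord 4,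
      β.coord 1 + β.coord 2 + (ω+1) • β.coord 3 + β.coord 4,
      β.coord 0 + β.coord 1 + (ω+1) • β.coord 2 + β.coord 3,
      β.coord 0 + (ω+1) • β.coord 2 + (ω+1) • β.coord 3 + β.coord 4,
      β.coord 1 + β.coord 2 + ω • β.coord 3 + β.coord 4,
      β.coord 0 + β.coord 1 + ω • β.coord 2 + β.coord 3],
      ![β.coord 0,
      β.coord 0 + β.coord 1 + β.coord 2 + β.coord 3 + β.coord 4,
      β.coord 0 + ω • β.coord 1 + (ω+1) • β.coord 2 + β.coord 3 + ω • β.coord 4,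
      β.coord 0 + (ω+1) • β.coord 1 + ω • β.coord 2 + β.coord 3 + (ω+1) • β.coord 4,
      β.coord 4,
      β.coord 0 + ω • β.coord 2 + ω • β.coord 3 + β.coord 4,
      β.coord 1 + β.coord 2 + (ω+1) • β.coord 3 + β.coord 4,
      β.coord 0 + β.coord 1 + (ω+1) • β.coord 2 + β.coord 3,
      β.coord 0 + (ω+1) • β.coord 2 + (ω+1) • β.coord 3 + β.coord 4,
      β.coord 1 + β.coord 2 + ω • β.coord 3 + β.coord 4,
      β.coord 0 + β.coord 1 + ω • β.coord 2 + β.coord 3],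
      ![(1:L) + pb.gen + pb.gen^3 + pb.gen^7,
      pb.gen + pb.gen^4 + pb.gen^5 + pb.gen^6 + pb.gen^7,
      (algebraMap K L ω + 1) * pb.gen + pb.gen^2 + (algebraMap K L ω + 1) * pb.gen^3 + pb.gen^4 + (algebraMap K L ω + 1) * pb.gen^5 + algebraMap K L ω * pb.gen^6 + pb.gen^7,
      algebraMap K L ω * pb.gen + pb.gen^2 + algebraMap K L ω * pb.gen^3 + pb.gen^4 + algebraMap K L ω * pb.gen^5 + (algebraMap K L ω + 1) * pb.gen^6 + pb.gen^7,
      pb.gen + pb.gen^2 + pb.gen^4 + pb.gen^8,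
      (algebraMap K L ω + 1) * pb.gen + algebraMap K L ω * pb.gen^2 + algebraMap K L ω * pb.gen^4 + algebraMap K L ω * pb.gen^5 + pb.gen^7,
      pb.gen + algebraMap K L ω * pb.gen^2 + algebraMap K L ω * pb.gen^3 + pb.gen^4 + algebraMap K L ω * pb.gen^5 + algebraMap K L ω * pb.gen^6,
      (algebraMap K L ω + 1) * pb.gen^2 + pb.gen^3 + pb.gen^4 + (algebraMap K L ω + 1) * pb.gen^5 + pb.gen^6 + pb.gen^7,
      algebraMap K L ω * pb.gen + (algebraMap K L ω + 1) * pb.gen^2 + (algebraMap K L ω + 1) * pb.gen^4 + (algebraMap K L ω + 1) * pb.gen^5 + pb.gen^7,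
      pb.gen + (algebraMap K L ω + 1) * pb.gen^2 + (algebraMap K L ω + 1) * pb.gen^3 + pb.gen^4 + (algebraMap K L ω + 1) * pb.gen^5 + (algebraMap K L ω + 1) * pb.gen^6,
      algebraMap K L ω * pb.gen^2 + pb.gen^3 + pb.gen^4 + algebraMap K L ω * pb.gen^5 + pb.gen^6 + pb.gen^7], fun a b => ?_⟩
    conv_lhs => rw [← β.sum_repr a, ← β.sum_repr b]
    rw [Fin.sum_univ_five, Fin.sum_univ_five]
    rw [hβ0, hβ1, hβ2, hβ3, hβ4]
    simp only [Fin.sum_univ_succ, Fin.sum_univ_zero, Matrix.cons_val_zero, Matrix.cons_val_succ,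
      LinearMap.add_apply, LinearMap.smul_apply, Module.Basis.coord_apply, smul_eq_mul,
      Algebra.smul_def, map_add, map_mul, map_one, add_zero]
    linear_combination key_interpolation (algebraMap K L ω) pb.gen (algebraMap K L (β.repr a 0)) (algebraMap K L (β.repr a 1)) (algebraMap K L (β.repr a 2)) (algebraMap K L (β.repr a 3)) (algebraMap K L (β.repr a 4)) (algebraMap K L (β.repr b 0)) (algebraMap K L (β.repr b 1)) (algebraMap K L (β.repr b 2)) (algebraMap K L (β.repr b 3)) (algebraMap K L (β.repr b 4)) H2 HW
  -- conclude by padding, using `2 = dim M ≤ r`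
  have hr2 : 2 ≤ r := hM ▸ hr.finrank_le
  obtain ⟨k, hk⟩ : ∃ k, 9 + r = 11 + k := ⟨r - 2, by omega⟩
  rw [hk]
  exact h11.pad k
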